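/- Let m, n be positive natural numbers, let Q_1, …, Q_m and P_1, …, P_m be n×n complex Hermitian positive semidefinite matrices, let Z be an n×n complex Hermitian positive definite matrix, and let σ² > 0 and P_R > 0 be real numbers. For each i set P̃_i = P_i + (σ²/P_R)·Z (which is Hermitian positive definite). Then for every nonzero vector ω ∈ ℂⁿ satisfying ωᴴ Z ω ≤ P_R, one has min_{1 ≤ i ≤ m} (ωᴴ Q_i ω)/(ωᴴ P_i ω + σ²) ≤ min_{1 ≤ i ≤ m} λ_max(P̃_i^{-1/2} Q_i P̃_i^{-1/2}), where the quadratic forms ωᴴ Q_i ω, ωᴴ P_i ω and ωᴴ Z ω are the (real) values of the Hermitian forms, λ_max denotes the largest eigenvalue of a Hermitian matrix, and P̃_i^{-1/2} is the inverse of the Hermitian positive-definite square root of P̃_i. -/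

import Mathlib

open Matrix
open scoped ComplexOrder

noncomputable def frobNorm {m n : Type*} [Fintype m] [Fintype n] (A : Matrix m n ℂ) : ℝ :=
  Real.sqrt (∑ i, ∑ j, ‖A i j‖ ^ 2)

noncomputable def lambdaMax {k : Type*} [Fintype k] [DecidableEq k] {A : Matrix k k ℂ}
    (hA : A.IsHermitian) : ℝ := ⨆ i, hA.eigenvalues i

noncomputable def lambdaMin {k : Type*} [Fintype k] [DecidableEq k] {A : Matrix k k ℂ}
    (hA : A.IsHermitian) : ℝ := ⨅ i, hA.eigenvalues i

noncomputable def invSqrt {k : Type*} [Fintype k] [DecidableEq k] {P : Matrix k k ℂ}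
    (hP : P.PosDef) : Matrix k k ℂ :=
  (hP.posSemidef.1.eigenvectorUnitary.1 *
    diagonal ((↑) ∘ (Real.sqrt ·) ∘ hP.posSemidef.1.eigenvalues) *
    (star hP.posSemidef.1.eigenvectorUnitary : Matrix k k ℂ))⁻¹

theorem invSqrt_isHermitian {k : Type*} [Fintype k] [DecidableEq k] {P : Matrix k k ℂ}
    (hP : P.PosDef) : (invSqrt hP).IsHermitian :=
  by
    apply IsHermitian.inv
    simp only [IsHermitian, conjTranspose_mul, Matrix.mul_assoc]
    have hd : (diagonal ((↑) ∘ (Real.sqrt ·) ∘ hP.posSemidef.1.eigenvalues) :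
        Matrix k k ℂ)ᴴ = diagonal ((↑) ∘ (Real.sqrt ·) ∘ hP.posSemidef.1.eigenvalues) := by
      rw [diagonal_conjTranspose, diagonal_eq_diagonal_iff]
      intro i
      simp
    rw [hd, ← star_eq_conjTranspose, star_star]
    rfl

theorem conj_isHermitian {k : Type*} [Fintype k] [DecidableEq k] {P Q : Matrix k k ℂ}
    (hP : P.PosDef) (hQ : Q.IsHermitian) : (invSqrt hP * Q * invSqrt hP).IsHermitian := by
  have h := isHermitian_mul_mul_conjTranspose (invSqrt hP) hQ
  rwa [(invSqrt_isHermitian hP).eq] at h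

theorem smul_posDef {k : Type*} [Fintype k] [DecidableEq k] {Z : Matrix k k ℂ}
    (hZ : Z.PosDef) {r : ℝ} (hr : 0 < r) : (((r : ℂ)) • Z).PosDef := by
  rw [posDef_iff_dotProduct_mulVec]
  constructor
  · show (((r : ℂ)) • Z)ᴴ = _
    rw [conjTranspose_smul, hZ.1.eq]
    congr 1
    simp [RCLike.star_def]
  · intro x hx
    rw [smul_mulVec, dotProduct_smul]
    have h2 := hZ.dotProduct_mulVec_pos hx
    have hc : (0 : ℂ) < (r : ℂ) := by exact_mod_cast hr
    exact smul_pos hc h2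

lemma rayleigh_le {k : Type*} [Fintype k] [DecidableEq k] [Nonempty k] {A : Matrix k k ℂ}
    (hA : A.IsHermitian) (x : k → ℂ) :
    (star x ⬝ᵥ (A *ᵥ x)).re ≤ (⨆ i, hA.eigenvalues i) * (star x ⬝ᵥ x).re := by
  set U : Matrix k k ℂ := (hA.eigenvectorUnitary : Matrix k k ℂ) with hU
  set c : k → ℂ := star U *ᵥ x with hc
  have hstar : star x ᵥ* U = star c := by
    rw [hc, star_mulVec, ← star_eq_conjTranspose, star_star]
  have h1 : star x ⬝ᵥ (A *ᵥ x) = ∑ j, (hA.eigenvalues j : ℂ) * (star (c j) * c j) := by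
    conv_lhs => rw [hA.spectral_theorem, Unitary.conjStarAlgAut_apply]
    rw [← mulVec_mulVec, ← mulVec_mulVec, dotProduct_mulVec, hstar]
    simp only [dotProduct, mulVec_diagonal, Function.comp_apply]
    exact Finset.sum_congr rfl fun j _ => by simp only [Pi.star_apply]; rw [mul_left_comm]; rfl
  have h2 : star x ⬝ᵥ x = ∑ j, star (c j) * c j := by
    have : star c ⬝ᵥ c = star x ⬝ᵥ x := by
      rw [hstar.symm, ← dotProduct_mulVec, hc, mulVec_mulVec,
        (Matrix.mem_unitaryGroup_iff).mp hA.eigenvectorUnitary.2, one_mulVec]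
    rw [← this]; rfl
  have hsc : ∀ j, star (c j) * c j = (Complex.normSq (c j) : ℂ) := fun j => by
    rw [Complex.star_def, Complex.normSq_eq_conj_mul_self]
  have hbdd : BddAbove (Set.range hA.eigenvalues) := Set.Finite.bddAbove (Set.finite_range _)
  rw [h1, h2, Complex.re_sum, Complex.re_sum]
  simp only [hsc, ← Complex.ofReal_mul, Complex.ofReal_re]
  rw [Finset.mul_sum]
  refine Finset.sum_le_sum fun j _ => ?_
  exact mul_le_mul_of_nonneg_right (le_ciSup hbdd j) (Complex.normSq_nonneg _)

/-- Proposition 1 (minimax upper bound). -/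
theorem stmt0 {m n : ℕ} (hm : 0 < m) (hn : 0 < n)
    (Q P : Fin m → Matrix (Fin n) (Fin n) ℂ)
    (hQ : ∀ i, (Q i).PosSemidef) (hP : ∀ i, (P i).PosSemidef)
    {Z : Matrix (Fin n) (Fin n) ℂ} (hZ : Z.PosDef)
    (sigmaSq PR : ℝ) (hsig : 0 < sigmaSq) (hPR : 0 < PR)
    (ω : Fin n → ℂ) (hω : ω ≠ 0)
    (hpow : (star ω ⬝ᵥ (Z *ᵥ ω)).re ≤ PR) :
    (⨅ i : Fin m, (star ω ⬝ᵥ ((Q i) *ᵥ ω)).re / ((star ω ⬝ᵥ ((P i) *ᵥ ω)).re + sigmaSq)) ≤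
      ⨅ i : Fin m,
        lambdaMax (conj_isHermitian
          (Matrix.PosDef.posSemidef_add (hP i) (smul_posDef hZ (div_pos hsig hPR)))
          (hQ i).1) := by
  have hm' : Nonempty (Fin m) := ⟨⟨0, hm⟩⟩
  have hn' : Nonempty (Fin n) := ⟨⟨0, hn⟩⟩
  refine le_ciInf fun i => ?_
  refine (ciInf_le (Set.Finite.bddBelow (Set.finite_range _)) i).trans ?_
  have hPt : (P i + ((sigmaSq / PR : ℝ) : ℂ) • Z).PosDef :=
    Matrix.PosDef.posSemidef_add (hP i) (smul_posDef hZ (div_pos hsig hPR))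
  set Pt := P i + ((sigmaSq / PR : ℝ) : ℂ) • Z with hPtdef
  set S := (hPt.posSemidef.1.eigenvectorUnitary.1 *
    diagonal ((↑) ∘ (Real.sqrt ·) ∘ hPt.posSemidef.1.eigenvalues) *
    (star hPt.posSemidef.1.eigenvectorUnitary : Matrix (Fin n) (Fin n) ℂ)) with hSdef
  have hSH : S.IsHermitian := by
    rw [hSdef]
    simp only [IsHermitian, conjTranspose_mul, Matrix.mul_assoc]
    have hd : (diagonal ((↑) ∘ (Real.sqrt ·) ∘ hPt.posSemidef.1.eigenvalues) :
        Matrix (Fin n) (Fin n) ℂ)ᴴ = diagonal ((↑) ∘ (Real.sqrt ·) ∘ hPt.posSemidef.1.eigenvalues) := by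
      rw [diagonal_conjTranspose, diagonal_eq_diagonal_iff]
      intro i
      simp
    rw [hd, ← star_eq_conjTranspose, star_star]
    rfl
  have hSS : S * S = Pt := by
    have hU : (star hPt.posSemidef.1.eigenvectorUnitary : Matrix (Fin n) (Fin n) ℂ) *
        hPt.posSemidef.1.eigenvectorUnitary.1 = 1 :=
      (Matrix.mem_unitaryGroup_iff').mp hPt.posSemidef.1.eigenvectorUnitary.2
    have hDD : (diagonal ((↑) ∘ (Real.sqrt ·) ∘ hPt.posSemidef.1.eigenvalues) :
        Matrix (Fin n) (Fin n) ℂ) * diagonal ((↑) ∘ (Real.sqrt ·) ∘ hPt.posSemidef.1.eigenvalues)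
        = diagonal ((↑) ∘ hPt.posSemidef.1.eigenvalues) := by
      rw [diagonal_mul_diagonal]
      congr 1
      funext j
      simp only [Function.comp_apply]
      rw [← Complex.ofReal_mul, Real.mul_self_sqrt (hPt.posSemidef.eigenvalues_nonneg j)]
    calc S * S = hPt.posSemidef.1.eigenvectorUnitary.1 *
          ((diagonal ((↑) ∘ (Real.sqrt ·) ∘ hPt.posSemidef.1.eigenvalues) :
          Matrix (Fin n) (Fin n) ℂ) * diagonal ((↑) ∘ (Real.sqrt ·) ∘ hPt.posSemidef.1.eigenvalues)) *
          (star hPt.posSemidef.1.eigenvectorUnitary : Matrix (Fin n) (Fin n) ℂ) := by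
          rw [hSdef]
          simp only [Matrix.mul_assoc]
          rw [← Matrix.mul_assoc _ hPt.posSemidef.1.eigenvectorUnitary.1, hU, Matrix.one_mul]
      _ = Pt := by
          rw [hDD]
          conv_rhs => rw [hPt.posSemidef.1.spectral_theorem, Unitary.conjStarAlgAut_apply]
          rfl
  have hdet : IsUnit S.det := by
    have h1 : IsUnit Pt.det := (Matrix.isUnit_iff_isUnit_det Pt).mp hPt.isUnit
    rw [← hSS, det_mul] at h1
    exact (IsUnit.mul_iff.mp h1).1
  have hSinv : S⁻¹ * S = 1 := nonsing_inv_mul S hdet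
  have hSinv' : S * S⁻¹ = 1 := mul_nonsing_inv S hdet
  have hM : (S⁻¹ * Q i * S⁻¹).IsHermitian := conj_isHermitian hPt (hQ i).1
  set v := S *ᵥ ω with hv
  have hvstar : star v = star ω ᵥ* S := by rw [hv, star_mulVec, hSH.eq]
  have hq1 : star v ⬝ᵥ ((S⁻¹ * Q i * S⁻¹) *ᵥ v) = star ω ⬝ᵥ (Q i *ᵥ ω) := by
    rw [hvstar, hv, mulVec_mulVec, ← dotProduct_mulVec, mulVec_mulVec,
      mul_assoc (S⁻¹ * Q i) S⁻¹ S, hSinv, mul_one, ← mul_assoc, hSinv', one_mul]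
  have hq2 : star v ⬝ᵥ v = star ω ⬝ᵥ (Pt *ᵥ ω) := by
    rw [hvstar, hv, ← dotProduct_mulVec, mulVec_mulVec, hSS]
  have ha : 0 ≤ (star ω ⬝ᵥ (Q i *ᵥ ω)).re := (hQ i).re_dotProduct_nonneg ω
  have hd : 0 < (star ω ⬝ᵥ (Pt *ᵥ ω)).re := hPt.re_dotProduct_pos hω
  have hb : 0 ≤ (star ω ⬝ᵥ (P i *ᵥ ω)).re := (hP i).re_dotProduct_nonneg ω
  have hzre : 0 ≤ (star ω ⬝ᵥ (Z *ᵥ ω)).re := hZ.posSemidef.re_dotProduct_nonneg ω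
  have key1 : (star ω ⬝ᵥ (Q i *ᵥ ω)).re ≤
      lambdaMax hM * (star ω ⬝ᵥ (Pt *ᵥ ω)).re := by
    have h := rayleigh_le hM v
    rwa [hq1, hq2] at h
  have key2 : (star ω ⬝ᵥ (Pt *ᵥ ω)).re ≤ (star ω ⬝ᵥ (P i *ᵥ ω)).re + sigmaSq := by
    have hexp : star ω ⬝ᵥ (Pt *ᵥ ω) =
        star ω ⬝ᵥ (P i *ᵥ ω) + ((sigmaSq / PR : ℝ) : ℂ) * (star ω ⬝ᵥ (Z *ᵥ ω)) := by
      rw [hPtdef, add_mulVec, dotProduct_add, smul_mulVec, dotProduct_smul,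
        smul_eq_mul]
    rw [hexp, Complex.add_re, Complex.re_ofReal_mul]
    have : (sigmaSq / PR) * (star ω ⬝ᵥ (Z *ᵥ ω)).re ≤ sigmaSq := by
      calc (sigmaSq / PR) * (star ω ⬝ᵥ (Z *ᵥ ω)).re ≤ (sigmaSq / PR) * PR :=
            mul_le_mul_of_nonneg_left hpow (le_of_lt (div_pos hsig hPR))
        _ = sigmaSq := div_mul_cancel₀ sigmaSq (ne_of_gt hPR)
    linarith
  have hlam : lambdaMax (conj_isHermitian
      (Matrix.PosDef.posSemidef_add (hP i) (smul_posDef hZ (div_pos hsig hPR)))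
      (hQ i).1) = lambdaMax hM := rfl
  rw [hlam]
  have hsum : 0 < (star ω ⬝ᵥ (P i *ᵥ ω)).re + sigmaSq := by linarith
  calc (star ω ⬝ᵥ (Q i *ᵥ ω)).re / ((star ω ⬝ᵥ (P i *ᵥ ω)).re + sigmaSq)
      ≤ (star ω ⬝ᵥ (Q i *ᵥ ω)).re / (star ω ⬝ᵥ (Pt *ᵥ ω)).re :=
        div_le_div_of_nonneg_left ha hd key2
    _ ≤ lambdaMax hM := by
        rw [div_le_iff₀ hd]
        linarith [key1]
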